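/- Let H₁ and H₂ be subgroups of order 8 of the group GL(2,𝔽₃) of invertible 2×2 matrices over the field with three elements. If H₁ and H₂ are isomorphic as abstract groups, then they are conjugate in GL(2,𝔽₃). -/

import Mathlib

set_option maxRecDepth 40000

open Pointwise

namespace GL2F3Aux

abbrev G := Matrix.GeneralLinearGroup (Fin 2) (ZMod 3)
abbrev M2 := Matrix (Fin 2) (Fin 2) (ZMod 3)
abbrev T := ZMod 3 × ZMod 3 × ZMod 3 × ZMod 3

def gU (a b c d a' b' c' d' : ZMod 3)
    (h1 : !![a,b;c,d] * !![a',b';c',d'] = 1 := by decide)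
    (h2 : !![a',b';c',d'] * !![a,b;c,d] = 1 := by decide) : G := ⟨_, _, h1, h2⟩

def mul' : T → T → T := fun p q =>
  (p.1 * q.1 + p.2.1 * q.2.2.1, p.1 * q.2.1 + p.2.1 * q.2.2.2,
   p.2.2.1 * q.1 + p.2.2.2 * q.2.2.1, p.2.2.1 * q.2.1 + p.2.2.2 * q.2.2.2)

def rep (A : M2) : T := (A 0 0, A 0 1, A 1 0, A 1 1)
def toM : T → M2 := fun p => !![p.1, p.2.1; p.2.2.1, p.2.2.2]

lemma toM_rep (A : M2) : toM (rep A) = A := (Matrix.eta_fin_two A).symm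
lemma rep_inj {A B : M2} (h : rep A = rep B) : A = B := by
  rw [← toM_rep A, h, toM_rep]
lemma rep_mul (A B : M2) : rep (A * B) = mul' (rep A) (rep B) := by
  simp [rep, mul', Matrix.mul_apply, Fin.sum_univ_two]

def urep (u : G) : T := rep (Units.val u)

lemma ueq_of_rep {u v : G} (h : urep u = urep v) : u = v := Units.ext (rep_inj h)
lemma urep_mul (u v : G) : urep (u * v) = mul' (urep u) (urep v) := by
  unfold urep
  rw [Units.val_mul, rep_mul]

lemma rep_toM (t : T) : rep (toM t) = t := rfl

lemma toM_mul (t s : T) : toM (mul' t s) = toM t * toM s := by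
  apply rep_inj
  rw [rep_mul, rep_toM, rep_toM, rep_toM]

lemma urep_one_toM : toM (urep 1) = 1 := by
  show toM (rep (Units.val (1 : G))) = 1
  rw [toM_rep, Units.val_one]

lemma urep_inv (u : G) (t : T) (h : mul' (urep u) t = urep 1) : urep u⁻¹ = t := by
  have h1 : Units.val u * toM t = 1 := by
    have h2 : toM (mul' (urep u) t) = toM (urep 1) := congrArg toM h
    rw [toM_mul, urep_one_toM] at h2
    have h4 : toM (urep u) = Units.val u := toM_rep _
    rwa [h4] at h2
  have h3 : Units.val u⁻¹ = toM t := by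
    calc Units.val u⁻¹ = Units.val u⁻¹ * (Units.val u * toM t) := by rw [h1, mul_one]
    _ = (Units.val u⁻¹ * Units.val u) * toM t := (mul_assoc _ _ _).symm
    _ = toM t := by rw [← Units.val_mul, inv_mul_cancel, Units.val_one, one_mul]
  show rep (Units.val u⁻¹) = t
  rw [h3, rep_toM]

lemma urep_injective : Function.Injective urep := fun _ _ h => ueq_of_rep h

lemma umem_iff (a : G) (l : List G) : a ∈ l ↔ urep a ∈ l.map urep := by
  constructor
  · exact fun h => List.mem_map_of_mem h
  · intro h
    obtain ⟨b, hb, he⟩ := List.mem_map.1 h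
    exact ueq_of_rep he ▸ hb

def listSubgroup (l : List G)
    (h1 : urep 1 ∈ l.map urep)
    (hm : ∀ t ∈ l.map urep, ∀ s ∈ l.map urep, mul' t s ∈ l.map urep)
    (hi : ∀ t ∈ l.map urep, ∃ s ∈ l.map urep, mul' t s = urep 1) : Subgroup G where
  carrier := {a | a ∈ l}
  one_mem' := (umem_iff 1 l).2 h1
  mul_mem' := fun {a b} ha hb => (umem_iff _ l).2 (by
    rw [urep_mul]
    exact hm _ ((umem_iff a l).1 ha) _ ((umem_iff b l).1 hb))
  inv_mem' := fun {a} ha => by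
    obtain ⟨s, hs, hmul⟩ := hi _ ((umem_iff a l).1 ha)
    exact (umem_iff _ l).2 (by rw [urep_inv a s hmul]; exact hs)

lemma mem_listSubgroup {a : G} {l : List G} {h1 hm hi} :
    a ∈ listSubgroup l h1 hm hi ↔ a ∈ l := Iff.rfl

lemma card_listSubgroup (l : List G) (h1 hm hi) (hnd : (l.map urep).Nodup) :
    Nat.card (listSubgroup l h1 hm hi) = l.length := by
  have hs : ((listSubgroup l h1 hm hi : Subgroup G) : Set G) = ↑l.toFinset := by
    ext a
    simp only [Finset.coe_sort_coe, Finset.mem_coe, List.mem_toFinset]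
    exact mem_listSubgroup
  rw [← SetLike.coe_sort_coe, hs, Nat.card_coe_set_eq, Set.ncard_coe_finset,
    List.toFinset_card_of_nodup (hnd.of_map _)]

-- the sixteen elements of our chosen Sylow 2-subgroup
def m0 : G := gU 1 0 0 1 1 0 0 1
def m1 : G := gU 0 1 1 1 2 1 1 0
def m2 : G := gU 1 1 1 2 2 2 2 1
def m3 : G := gU 1 2 2 0 0 2 2 2
def m4 : G := gU 2 0 0 2 2 0 0 2
def m5 : G := gU 0 2 2 2 1 2 2 0
def m6 : G := gU 2 2 2 1 1 1 1 2
def m7 : G := gU 2 1 1 0 0 1 1 1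
def m8 : G := gU 0 1 2 0 0 2 1 0
def m9 : G := gU 1 1 0 2 1 1 0 2
def m10 : G := gU 1 2 2 2 2 1 1 1
def m11 : G := gU 2 0 2 1 2 0 2 1
def m12 : G := gU 0 2 1 0 0 1 2 0
def m13 : G := gU 2 2 0 1 2 2 0 1
def m14 : G := gU 2 1 1 1 1 2 2 2
def m15 : G := gU 1 0 1 2 1 0 1 2

def p0L : List G := [m0, m1, m2, m3, m4, m5, m6, m7, m8, m9, m10, m11, m12, m13, m14, m15]
def cL : List G := [m0, m1, m2, m3, m4, m5, m6, m7]
def dL : List G := [m0, m2, m4, m6, m9, m11, m13, m15]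
def qL : List G := [m0, m2, m4, m6, m8, m10, m12, m14]
def vL : List G := [m0, m2, m4, m6]

def P0 : Subgroup G := listSubgroup p0L (by decide) (by decide) (by decide)
def Csub : Subgroup G := listSubgroup cL (by decide) (by decide) (by decide)
def Dsub : Subgroup G := listSubgroup dL (by decide) (by decide) (by decide)
def Qsub : Subgroup G := listSubgroup qL (by decide) (by decide) (by decide)

lemma cardP0 : Nat.card P0 = 16 := (card_listSubgroup _ _ _ _ (by decide)).trans rfl
lemma cardC : Nat.card Csub = 8 := (card_listSubgroup _ _ _ _ (by decide)).trans rfl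
lemma cardD : Nat.card Dsub = 8 := (card_listSubgroup _ _ _ _ (by decide)).trans rfl
lemma cardQ : Nat.card Qsub = 8 := (card_listSubgroup _ _ _ _ (by decide)).trans rfl

lemma upow2 (y : G) : urep (y^2) = mul' (urep y) (urep y) := by
  rw [pow_two, urep_mul]
lemma upow4 (y : G) :
    urep (y^4) = mul' (mul' (mul' (urep y) (urep y)) (urep y)) (urep y) := by
  rw [show (4:ℕ) = 2 + 1 + 1 from rfl, pow_succ, pow_succ, urep_mul, urep_mul, upow2]

lemma ex2 : m1^2 = m2 := ueq_of_rep (by rw [upow2]; decide)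
lemma e2 : m2^2 = m4 := ueq_of_rep (by rw [upow2]; decide)
lemma e3 : m2^3 = m6 := ueq_of_rep (by rw [pow_succ, urep_mul, upow2]; decide)

/-- key lemma: two order 8 subgroups sharing two elements that generate a subgroup
of order at least 5 are equal -/
lemma key (H X : Subgroup G) (h8 : Nat.card H = 8) (hX8 : Nat.card X = 8)
    (a b : G) (haH : a ∈ H) (haX : a ∈ X) (hbH : b ∈ H) (hbX : b ∈ X)
    (hnd : (([1, a, a^2, a^3, b] : List G).map urep).Nodup) : H = X := by
  set K := Subgroup.closure {a, b} with hK
  have hKH : K ≤ H := (Subgroup.closure_le _).2 (by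
    intro y hy
    rcases hy with rfl | rfl
    exacts [haH, hbH])
  have hKX : K ≤ X := (Subgroup.closure_le _).2 (by
    intro y hy
    rcases hy with rfl | rfl
    exacts [haX, hbX])
  have haK : a ∈ K := Subgroup.subset_closure (by left; rfl)
  have hbK : b ∈ K := Subgroup.subset_closure (by right; rfl)
  have hnd' : ([1, a, a^2, a^3, b] : List G).Nodup := hnd.of_map _
  have hsub : (↑([1, a, a^2, a^3, b] : List G).toFinset : Set G) ⊆ (K : Set G) := by
    intro y hy
    simp only [Finset.coe_sort_coe, Finset.mem_coe, List.mem_toFinset, List.mem_cons,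
      List.not_mem_nil, or_false] at hy
    rcases hy with rfl | rfl | rfl | rfl | rfl
    exacts [K.one_mem, haK, K.pow_mem haK 2, K.pow_mem haK 3, hbK]
  have h5 : 5 ≤ Nat.card K := by
    have hn := Set.ncard_le_ncard hsub (Set.toFinite _)
    rw [Set.ncard_coe_finset, List.toFinset_card_of_nodup hnd'] at hn
    rw [← SetLike.coe_sort_coe, Nat.card_coe_set_eq]
    exact hn
  have hdvd : Nat.card K ∣ 8 := h8 ▸ Subgroup.card_dvd_of_le hKH
  have hKcard : Nat.card K = 8 := by
    obtain ⟨k, hk⟩ := hdvd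
    have hkpos : k ≠ 0 := by rintro rfl; omega
    have hk2 : k = 1 := by
      by_contra hne
      have h2k : 2 ≤ k := by omega
      have h10 : Nat.card K * 2 ≤ Nat.card K * k := Nat.mul_le_mul_left _ h2k
      rw [← hk] at h10
      omega
    rw [hk2, mul_one] at hk
    omega
  have hH : K = H := Subgroup.eq_of_le_of_card_ge hKH (by rw [hKcard, h8])
  have hX : K = X := Subgroup.eq_of_le_of_card_ge hKX (by rw [hKcard, hX8])
  rw [← hH, hX]

lemma classify (H : Subgroup G) (hle : H ≤ P0) (h8 : Nat.card H = 8) :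
    H = Csub ∨ H = Dsub ∨ H = Qsub := by
  have hx1P : m1 ∈ P0 := (umem_iff _ _).2 (by decide)
  -- x² ∈ H via index 2
  have hx2 : m2 ∈ H := by
    have hiso := Subgroup.subgroupOfEquivOfLe hle
    have hcard' : Nat.card (H.subgroupOf P0) = 8 := by
      rw [Nat.card_congr hiso.toEquiv, h8]
    have hidx : (H.subgroupOf P0).index = 2 := by
      have hmi := Subgroup.card_mul_index (H.subgroupOf P0)
      rw [hcard', cardP0] at hmi
      omega
    have hsq := Subgroup.sq_mem_of_index_two hidx ⟨m1, hx1P⟩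
    rw [Subgroup.mem_subgroupOf] at hsq
    have hc : (((⟨m1, hx1P⟩ : P0)^2 : P0) : G) = m2 := by
      rw [SubmonoidClass.coe_pow]
      exact ex2
    rwa [hc] at hsq
  -- some element outside V
  have hex : ∃ b ∈ H, b ∉ vL := by
    by_contra hc
    push_neg at hc
    have hsub : (H : Set G) ⊆ ↑vL.toFinset := by
      intro y hy
      simpa [List.mem_toFinset] using hc y hy
    have hle4 : Nat.card H ≤ 4 := by
      rw [← SetLike.coe_sort_coe, Nat.card_coe_set_eq]
      calc (H : Set G).ncard ≤ (↑vL.toFinset : Set G).ncard :=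
            Set.ncard_le_ncard hsub (Set.toFinite _)
      _ = vL.toFinset.card := Set.ncard_coe_finset _
      _ = 4 := by
            rw [List.toFinset_card_of_nodup (List.Nodup.of_map urep (by decide))]
            rfl
    omega
  obtain ⟨b, hbH, hbv⟩ := hex
  have hbp : b ∈ p0L := hle hbH
  simp only [p0L, List.mem_cons, List.not_mem_nil, or_false] at hbp
  rcases hbp with rfl|rfl|rfl|rfl|rfl|rfl|rfl|rfl|rfl|rfl|rfl|rfl|rfl|rfl|rfl|rfl
  all_goals first
    | exact absurd ((umem_iff _ _).2 (by decide)) hbv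
    | exact Or.inl (key H Csub h8 cardC m2 _ hx2 ((umem_iff _ _).2 (by decide)) hbH
        ((umem_iff _ _).2 (by decide)) (by rw [e2, e3]; decide))
    | exact Or.inr (Or.inl (key H Dsub h8 cardD m2 _ hx2 ((umem_iff _ _).2 (by decide)) hbH
        ((umem_iff _ _).2 (by decide)) (by rw [e2, e3]; decide)))
    | exact Or.inr (Or.inr (key H Qsub h8 cardQ m2 _ hx2 ((umem_iff _ _).2 (by decide)) hbH
        ((umem_iff _ _).2 (by decide)) (by rw [e2, e3]; decide)))

/-- invariant A: has an element of order more than 4 -/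
def AP (X : Subgroup G) : Prop := ∃ y ∈ X, y^4 ≠ 1
/-- invariant B: has two distinct nontrivial involutions -/
def BP (X : Subgroup G) : Prop :=
  ∃ u ∈ X, ∃ v ∈ X, u * u = 1 ∧ v * v = 1 ∧ u ≠ 1 ∧ v ≠ 1 ∧ u ≠ v

lemma AP_iso {X Y : Subgroup G} (e : X ≃* Y) (h : AP X) : AP Y := by
  obtain ⟨y, hy, h4⟩ := h
  refine ⟨(e ⟨y, hy⟩ : Y), (e ⟨y, hy⟩).2, fun hc => h4 ?_⟩
  have h1 : e ⟨y, hy⟩ ^ 4 = 1 := Subtype.ext (by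
    rw [SubmonoidClass.coe_pow, OneMemClass.coe_one]
    exact hc)
  have h2 : (⟨y, hy⟩ : X)^4 = 1 := by
    apply e.injective
    rw [map_pow, h1, map_one]
  have h3 := congrArg (Subtype.val) h2
  rwa [SubmonoidClass.coe_pow, OneMemClass.coe_one] at h3

lemma BP_iso {X Y : Subgroup G} (e : X ≃* Y) (h : BP X) : BP Y := by
  obtain ⟨u, hu, v, hv, huu, hvv, hu1, hv1, huv⟩ := h
  refine ⟨(e ⟨u, hu⟩ : Y), (e ⟨u, hu⟩).2, (e ⟨v, hv⟩ : Y), (e ⟨v, hv⟩).2, ?_, ?_, ?_, ?_, ?_⟩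
  · have h1 : e ⟨u, hu⟩ * e ⟨u, hu⟩ = 1 := by
      rw [← map_mul, show (⟨u, hu⟩ : X) * ⟨u, hu⟩ = 1 from Subtype.ext huu, map_one]
    have h3 := congrArg Subtype.val h1
    rwa [MulMemClass.coe_mul, OneMemClass.coe_one] at h3
  · have h1 : e ⟨v, hv⟩ * e ⟨v, hv⟩ = 1 := by
      rw [← map_mul, show (⟨v, hv⟩ : X) * ⟨v, hv⟩ = 1 from Subtype.ext hvv, map_one]
    have h3 := congrArg Subtype.val h1
    rwa [MulMemClass.coe_mul, OneMemClass.coe_one] at h3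
  · intro hc
    apply hu1
    have h0 : e ⟨u, hu⟩ = 1 := Subtype.ext (by rw [OneMemClass.coe_one]; exact hc)
    have h2 : (⟨u, hu⟩ : X) = 1 := by apply e.injective; rw [h0, map_one]
    have h3 := congrArg Subtype.val h2
    rwa [OneMemClass.coe_one] at h3
  · intro hc
    apply hv1
    have h0 : e ⟨v, hv⟩ = 1 := Subtype.ext (by rw [OneMemClass.coe_one]; exact hc)
    have h2 : (⟨v, hv⟩ : X) = 1 := by apply e.injective; rw [h0, map_one]
    have h3 := congrArg Subtype.val h2
    rwa [OneMemClass.coe_one] at h3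
  · intro hc
    apply huv
    have h2 : (⟨u, hu⟩ : X) = ⟨v, hv⟩ := e.injective (Subtype.ext hc)
    exact congrArg Subtype.val h2

lemma APC : AP Csub := by
  refine ⟨m1, (umem_iff _ _).2 (by decide), fun h => ?_⟩
  have h2 := congrArg urep h
  rw [upow4] at h2
  exact absurd h2 (by decide)

lemma nAPD : ¬ AP Dsub := by
  rintro ⟨y, hy, h4⟩
  apply h4
  apply ueq_of_rep
  rw [upow4]
  have hall : ∀ t ∈ dL.map urep, mul' (mul' (mul' t t) t) t = urep 1 := by decide
  exact hall _ ((umem_iff y dL).1 hy)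

lemma nAPQ : ¬ AP Qsub := by
  rintro ⟨y, hy, h4⟩
  apply h4
  apply ueq_of_rep
  rw [upow4]
  have hall : ∀ t ∈ qL.map urep, mul' (mul' (mul' t t) t) t = urep 1 := by decide
  exact hall _ ((umem_iff y qL).1 hy)

lemma BPD : BP Dsub := by
  refine ⟨m9, (umem_iff _ _).2 (by decide), m11, (umem_iff _ _).2 (by decide),
    ueq_of_rep (by rw [urep_mul]; decide), ueq_of_rep (by rw [urep_mul]; decide),
    fun h => absurd (congrArg urep h) (by decide),
    fun h => absurd (congrArg urep h) (by decide),
    fun h => absurd (congrArg urep h) (by decide)⟩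

lemma nBP_aux (l : List G)
    (hl : ∀ t ∈ l.map urep, ∀ s ∈ l.map urep, mul' t t = urep 1 → mul' s s = urep 1 →
      t ≠ urep 1 → s ≠ urep 1 → t = s)
    {u v : G} (hu : u ∈ l) (hv : v ∈ l) (huu : u * u = 1) (hvv : v * v = 1)
    (hu1 : u ≠ 1) (hv1 : v ≠ 1) : u = v := by
  apply ueq_of_rep
  refine hl _ ((umem_iff u l).1 hu) _ ((umem_iff v l).1 hv) ?_ ?_ ?_ ?_
  · rw [← urep_mul]; exact congrArg urep huu
  · rw [← urep_mul]; exact congrArg urep hvv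
  · exact fun h => hu1 (ueq_of_rep h)
  · exact fun h => hv1 (ueq_of_rep h)

lemma nBPC : ¬ BP Csub := by
  rintro ⟨u, hu, v, hv, huu, hvv, hu1, hv1, huv⟩
  exact huv (nBP_aux cL (by decide) hu hv huu hvv hu1 hv1)

lemma nBPQ : ¬ BP Qsub := by
  rintro ⟨u, hu, v, hv, huu, hvv, hu1, hv1, huv⟩
  exact huv (nBP_aux qL (by decide) hu hv huu hvv hu1 hv1)

lemma cardG : Nat.card G = 48 := by
  have h := Matrix.card_GL_field (𝔽 := ZMod 3) (n := 2)
  rw [h]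
  rw [ZMod.card]
  decide

end GL2F3Aux

open GL2F3Aux Pointwise

/-- Two subgroups of order 8 of `GL(2,𝔽₃)` that are isomorphic as abstract groups are
conjugate in `GL(2,𝔽₃)`. -/
theorem isomorphic_order_eight_subgroups_of_GL2F3_are_conjugate
    (H₁ H₂ : Subgroup (Matrix.GeneralLinearGroup (Fin 2) (ZMod 3)))
    (h₁ : Nat.card H₁ = 8) (h₂ : Nat.card H₂ = 8) (hiso : Nonempty (H₁ ≃* H₂)) :
    ∃ x : Matrix.GeneralLinearGroup (Fin 2) (ZMod 3),
      Subgroup.map (MulAut.conj x).toMonoidHom H₁ = H₂ := by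
  obtain ⟨e⟩ := hiso
  haveI : Finite (Subgroup G) :=
    Finite.of_injective (fun H => (H : Set G)) SetLike.coe_injective
  haveI : Finite (Sylow 2 G) :=
    Finite.of_injective (fun P => (P : Subgroup G))
      (fun P Q h => Sylow.ext h)
  have hfact : (Nat.card G).factorization 2 = 4 := by
    rw [cardG, show (48 : ℕ) = 2 ^ 4 * 3 by norm_num,
      Nat.factorization_mul (by norm_num) (by norm_num)]
    rw [Nat.Prime.factorization_pow (by norm_num), Nat.Prime.factorization (by norm_num)]
    simp [Finsupp.single_apply]
  let P0syl : Sylow 2 G := Sylow.ofCard P0 (by rw [cardP0, hfact]; norm_num)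
  have pg1 : IsPGroup 2 H₁ := IsPGroup.of_card (n := 3) (by rw [h₁]; norm_num)
  have pg2 : IsPGroup 2 H₂ := IsPGroup.of_card (n := 3) (by rw [h₂]; norm_num)
  obtain ⟨P₁, hP₁⟩ := pg1.exists_le_sylow
  obtain ⟨P₂, hP₂⟩ := pg2.exists_le_sylow
  obtain ⟨g₁, hg₁⟩ := MulAction.exists_smul_eq G P₁ P0syl
  obtain ⟨g₂, hg₂⟩ := MulAction.exists_smul_eq G P₂ P0syl
  have hP0eq₁ : MulAut.conj g₁ • (P₁ : Subgroup G) = P0 := by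
    rw [← Sylow.coe_subgroup_smul, hg₁]; rfl
  have hP0eq₂ : MulAut.conj g₂ • (P₂ : Subgroup G) = P0 := by
    rw [← Sylow.coe_subgroup_smul, hg₂]; rfl
  have hK₁P : MulAut.conj g₁ • H₁ ≤ P0 := by
    rw [← hP0eq₁]
    exact Subgroup.pointwise_smul_le_pointwise_smul_iff.2 hP₁
  have hK₂P : MulAut.conj g₂ • H₂ ≤ P0 := by
    rw [← hP0eq₂]
    exact Subgroup.pointwise_smul_le_pointwise_smul_iff.2 hP₂
  have hK₁8 : Nat.card (MulAut.conj g₁ • H₁ : Subgroup G) = 8 := by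
    rw [← h₁]
    exact (Nat.card_congr (Subgroup.equivSMul (MulAut.conj g₁) H₁).toEquiv).symm
  have hK₂8 : Nat.card (MulAut.conj g₂ • H₂ : Subgroup G) = 8 := by
    rw [← h₂]
    exact (Nat.card_congr (Subgroup.equivSMul (MulAut.conj g₂) H₂).toEquiv).symm
  have eiso : (MulAut.conj g₁ • H₁ : Subgroup G) ≃* (MulAut.conj g₂ • H₂ : Subgroup G) :=
    ((Subgroup.equivSMul (MulAut.conj g₁) H₁).symm.trans e).trans
      (Subgroup.equivSMul (MulAut.conj g₂) H₂)
  have final : MulAut.conj g₁ • H₁ = MulAut.conj g₂ • H₂ →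
      ∃ x : G, Subgroup.map (MulAut.conj x).toMonoidHom H₁ = H₂ := by
    intro hK
    refine ⟨g₂⁻¹ * g₁, ?_⟩
    have hsm : MulAut.conj (g₂⁻¹ * g₁) • H₁ = H₂ := by
      rw [map_mul, mul_smul, hK, map_inv, inv_smul_smul]
    rw [← hsm]
    rfl
  rcases classify _ hK₁P hK₁8 with h|h|h <;> rcases classify _ hK₂P hK₂8 with h'|h'|h'
  · exact final (h.trans h'.symm)
  · rw [h, h'] at eiso
    exact absurd (AP_iso eiso APC) nAPD
  · rw [h, h'] at eiso
    exact absurd (AP_iso eiso APC) nAPQ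
  · rw [h, h'] at eiso
    exact absurd (AP_iso eiso.symm APC) nAPD
  · exact final (h.trans h'.symm)
  · rw [h, h'] at eiso
    exact absurd (BP_iso eiso BPD) nBPQ
  · rw [h, h'] at eiso
    exact absurd (AP_iso eiso.symm APC) nAPQ
  · rw [h, h'] at eiso
    exact absurd (BP_iso eiso.symm BPD) nBPQ
  · exact final (h.trans h'.symm)
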